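/- Combining the multiplicative trace inequality with the gradient bound on the weight: for σ_z(x) = (|x−z|² + θ²)^(1/2) on an interval K = (a,b) ⊂ ℝ with z ∈ ℝ and any α ∈ ℝ, one has σ_z(a)^{2α} + σ_z(b)^{2α} ≤ (2/(b−a)) ∫_K σ_z^{2α} + 2|α| θ^{−1} ∫_K σ_z^{2α}. -/

import Mathlib

open intervalIntegral

/-- Boundary bound for powers of the 1-D weight `σ_z(x) = ((x−z)² + θ²)^(1/2)`:
`σ_z(a)^{2α} + σ_z(b)^{2α} ≤ (2/(b−a)) ∫_K σ_z^{2α} + 2|α|θ⁻¹ ∫_K σ_z^{2α}`. -/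
theorem stmt12 (z θ : ℝ) (hθ : 0 < θ) (α : ℝ) (a b : ℝ) (hab : a < b)
    (σ : ℝ → ℝ) (hσ : ∀ x, σ x = Real.sqrt ((x - z) ^ 2 + θ ^ 2)) :
    σ a ^ (2 * α) + σ b ^ (2 * α) ≤
      (2 / (b - a)) * (∫ x in a..b, σ x ^ (2 * α)) +
        2 * |α| * θ⁻¹ * ∫ x in a..b, σ x ^ (2 * α) := by
  set F : ℝ → ℝ := fun x => ((x - z) ^ 2 + θ ^ 2) ^ α with hFdef
  set F' : ℝ → ℝ := fun x => α * ((x - z) ^ 2 + θ ^ 2) ^ (α - 1) * (2 * (x - z)) with hF'def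
  have hgpos : ∀ x : ℝ, (0:ℝ) < (x - z) ^ 2 + θ ^ 2 := fun x => by positivity
  -- rewrite σ x ^ (2α) as F x
  have hσF : ∀ x, σ x ^ (2 * α) = F x := by
    intro x
    rw [hσ x, Real.sqrt_eq_rpow, ← Real.rpow_mul (hgpos x).le]
    show ((x - z) ^ 2 + θ ^ 2) ^ (1 / 2 * (2 * α)) = ((x - z) ^ 2 + θ ^ 2) ^ α
    congr 1; ring
  simp only [hσF]
  -- derivative
  have hderiv : ∀ x : ℝ, HasDerivAt F (F' x) x := by
    intro x
    have hg : HasDerivAt (fun x : ℝ => (x - z) ^ 2 + θ ^ 2) (2 * (x - z)) x := by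
      have := (((hasDerivAt_id x).sub_const z).pow 2).add_const (θ ^ 2)
      exact this.congr_deriv (by norm_num)
    have hne : (x - z) ^ 2 + θ ^ 2 ≠ 0 := (hgpos x).ne'
    have := hg.rpow_const (p := α) (Or.inl hne)
    simpa [hF'def, mul_comm, mul_assoc, mul_left_comm] using this
  -- continuity
  have hcontF : Continuous F := by
    apply Continuous.rpow_const (by continuity)
    intro x; exact Or.inl (hgpos x).ne'
  have hcontF' : Continuous F' := by
    apply Continuous.mul
    · apply Continuous.mul continuous_const
      apply Continuous.rpow_const (by continuity)
      intro x; exact Or.inl (hgpos x).ne'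
    · continuity
  have hFpos : ∀ x, 0 < F x := fun x => Real.rpow_pos_of_pos (hgpos x) α
  -- pointwise derivative bound
  have hbound : ∀ x : ℝ, |F' x| ≤ 2 * |α| * θ⁻¹ * F x := by
    intro x
    have h1 : |F' x| = 2 * |α| * (((x - z) ^ 2 + θ ^ 2) ^ (α - 1) * |x - z|) := by
      rw [hF'def]
      rw [abs_mul, abs_mul, abs_mul]
      rw [abs_of_pos (Real.rpow_pos_of_pos (hgpos x) (α - 1))]
      norm_num; ring
    rw [h1]
    have h2 : ((x - z) ^ 2 + θ ^ 2) ^ (α - 1) = F x * ((x - z) ^ 2 + θ ^ 2)⁻¹ := by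
      rw [hFdef]
      rw [show α - 1 = α + (-1) by ring, Real.rpow_add (hgpos x), Real.rpow_neg_one]
    rw [h2]
    have h3 : ((x - z) ^ 2 + θ ^ 2)⁻¹ * |x - z| ≤ θ⁻¹ := by
      have h' : |x - z| ≤ ((x - z) ^ 2 + θ ^ 2) * θ⁻¹ := by
        rw [← div_eq_mul_inv, le_div_iff₀ hθ]
        nlinarith [sq_nonneg (|x - z| - θ), sq_abs (x - z), abs_nonneg (x - z)]
      calc ((x - z) ^ 2 + θ ^ 2)⁻¹ * |x - z|
          ≤ ((x - z) ^ 2 + θ ^ 2)⁻¹ * (((x - z) ^ 2 + θ ^ 2) * θ⁻¹) := by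
            apply mul_le_mul_of_nonneg_left h'
            positivity
        _ = θ⁻¹ := by
            rw [← mul_assoc, inv_mul_cancel₀ (hgpos x).ne', one_mul]
    calc 2 * |α| * (F x * ((x - z) ^ 2 + θ ^ 2)⁻¹ * |x - z|) 
        = 2 * |α| * F x * (((x - z) ^ 2 + θ ^ 2)⁻¹ * |x - z|) := by ring
      _ ≤ 2 * |α| * F x * θ⁻¹ := by
          apply mul_le_mul_of_nonneg_left h3; positivity
      _ = 2 * |α| * θ⁻¹ * F x := by ring
  -- integrability
  have hintF : IntervalIntegrable F MeasureTheory.volume a b := hcontF.intervalIntegrable a b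
  have habsF' : ∀ u v : ℝ, IntervalIntegrable (fun t => |F' t|) MeasureTheory.volume u v :=
    fun u v => (hcontF'.abs).intervalIntegrable u v
  set D : ℝ := ∫ t in a..b, |F' t| with hD
  -- FTC consequence
  have hftc : ∀ u v : ℝ, (∫ t in u..v, F' t) = F v - F u := by
    intro u v
    exact intervalIntegral.integral_eq_sub_of_hasDerivAt (fun x _ => hderiv x)
      (hcontF'.intervalIntegrable u v)
  -- pointwise trace bound
  have hkey : ∀ x ∈ Set.Icc a b, F a + F b ≤ 2 * F x + D := by
    intro x hx
    have hax : a ≤ x := hx.1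
    have hxb : x ≤ b := hx.2
    have e1 : F a + F b = 2 * F x - (∫ t in a..x, F' t) + ∫ t in x..b, F' t := by
      rw [hftc a x, hftc x b]; ring
    have i1 : |∫ t in a..x, F' t| ≤ ∫ t in a..x, |F' t| :=
      intervalIntegral.abs_integral_le_integral_abs hax
    have i2 : |∫ t in x..b, F' t| ≤ ∫ t in x..b, |F' t| :=
      intervalIntegral.abs_integral_le_integral_abs hxb
    have isum : (∫ t in a..x, |F' t|) + ∫ t in x..b, |F' t| = D := by
      rw [hD]
      exact intervalIntegral.integral_add_adjacent_intervals (habsF' a x) (habsF' x b)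
    have := abs_le.mp i1
    have := abs_le.mp i2
    nlinarith [abs_le.mp i1, abs_le.mp i2]
  -- integrate over [a,b]
  have hmono : (∫ _ in a..b, (F a + F b)) ≤ ∫ x in a..b, (2 * F x + D) := by
    apply intervalIntegral.integral_mono_on hab.le
      (intervalIntegrable_const)
      (((hintF.const_mul 2)).add (intervalIntegrable_const))
    exact hkey
  rw [intervalIntegral.integral_const] at hmono
  rw [intervalIntegral.integral_add ((hintF.const_mul 2)) intervalIntegrable_const] at hmono
  rw [intervalIntegral.integral_const_mul, intervalIntegral.integral_const] at hmono
  have hba : (0:ℝ) < b - a := by linarith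
  -- D ≤ 2|α|θ⁻¹ ∫F
  have hDle : D ≤ 2 * |α| * θ⁻¹ * ∫ x in a..b, F x := by
    rw [hD, ← intervalIntegral.integral_const_mul]
    apply intervalIntegral.integral_mono_on hab.le (habsF' a b)
      ((hintF.const_mul _)) (fun x _ => hbound x)
  -- conclude
  simp only [smul_eq_mul] at hmono
  have h5 : F a + F b ≤ (2 / (b - a)) * (∫ x in a..b, F x) + D := by
    have h2' : (b - a) * (F a + F b) ≤
        (b - a) * ((2 / (b - a)) * (∫ x in a..b, F x) + D) := by
      have he : (b - a) * ((2 / (b - a)) * (∫ x in a..b, F x) + D) =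
          2 * (∫ x in a..b, F x) + (b - a) * D := by
        field_simp
      rw [he]; exact hmono
    exact le_of_mul_le_mul_left h2' hba
  linarith [h5, hDle]
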